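/- Let G = ∏_p G_p be a pronilpotent group expressed as a product of pro-p groups. Then G is strongly complete (every finite-index subgroup is open) if and only if G_p is strongly complete for every prime p. -/

import Mathlib

open scoped Pointwise

/-- In a profinite group, an element lying in every open normal subgroup is trivial. -/
lemma aux_eq_one_of_mem_all {H : Type*} [Group H] [TopologicalSpace H] [IsTopologicalGroup H]
    [CompactSpace H] [TotallyDisconnectedSpace H] [T2Space H]
    {g : H} (hg : ∀ U : OpenNormalSubgroup H, g ∈ U) : g = 1 := by
  by_contra hne
  have : TotallySeparatedSpace H := loc_compact_t2_tot_disc_iff_tot_sep.mp inferInstance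
  obtain ⟨W, hW, h1W, hgW⟩ :=
    exists_isClopen_of_totally_separated (Ne.symm hne : (1 : H) ≠ g)
  obtain ⟨U, hU⟩ := IsTopologicalGroup.exist_openNormalSubgroup_sub_clopen_nhds_of_one hW h1W
  exact hgW (hU (hg U))

/-- In a pro-`p` group, every element has a `q`-th root for any prime `q ≠ p`. -/
lemma aux_pow_surj {H : Type*} [Group H] [TopologicalSpace H] [IsTopologicalGroup H]
    [CompactSpace H] [TotallyDisconnectedSpace H] [T2Space H] {p : ℕ} (hp : p.Prime)
    (hpro : ∀ (U : Subgroup H) [U.Normal], IsOpen (U : Set H) → IsPGroup p (H ⧸ U))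
    {q : ℕ} (hq : q.Prime) (hne : q ≠ p) (x : H) : ∃ y : H, y ^ q = x := by
  have : Nonempty (OpenNormalSubgroup H) := ⟨⟨⟨⊤, isOpen_univ⟩, inferInstance⟩⟩
  set C : OpenNormalSubgroup H → Set H := fun U => {y : H | (y ^ q)⁻¹ * x ∈ U} with hC
  have hcont : Continuous fun y : H => (y ^ q)⁻¹ * x :=
    ((continuous_pow q).inv).mul continuous_const
  have hclosed : ∀ U : OpenNormalSubgroup H, IsClosed (C U) := fun U =>
    (U.toOpenSubgroup.isClosed).preimage hcont
  have hne' : ∀ U : OpenNormalSubgroup H, (C U).Nonempty := by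
    intro U
    haveI : U.toSubgroup.Normal := U.isNormal'
    have hPG : IsPGroup p (H ⧸ U.toSubgroup) := hpro U.toSubgroup U.isOpen
    haveI : Finite (H ⧸ U.toSubgroup) := U.toSubgroup.quotient_finite_of_isOpen U.isOpen
    haveI : Fact p.Prime := ⟨hp⟩
    obtain ⟨k, hk⟩ := hPG.exists_card_eq
    have hcop : (Nat.card (H ⧸ U.toSubgroup)).Coprime q := by
      rw [hk]
      exact (Nat.Coprime.pow_left _ ((Nat.coprime_primes hp hq).mpr (Ne.symm hne)))
    obtain ⟨z, hz⟩ := (powCoprime hcop).surjective (QuotientGroup.mk x)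
    obtain ⟨y, rfl⟩ := QuotientGroup.mk_surjective z
    refine ⟨y, ?_⟩
    have : ((y : H) ^ q : H) = y ^ q := rfl
    have hz' : (QuotientGroup.mk (y ^ q) : H ⧸ U.toSubgroup) = QuotientGroup.mk x := by
      simpa [powCoprime] using hz
    exact (QuotientGroup.eq (s := U.toSubgroup)).mp hz'
  have hdir : Directed (· ⊇ ·) C := by
    intro U V
    refine ⟨U ⊓ V, fun y hy => ?_, fun y hy => ?_⟩
    · exact (hy : _ ∈ (U ⊓ V : OpenNormalSubgroup H)).1
    · exact (hy : _ ∈ (U ⊓ V : OpenNormalSubgroup H)).2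
  obtain ⟨y, hy⟩ := IsCompact.nonempty_iInter_of_directed_nonempty_isCompact_isClosed C hdir hne'
    (fun U => (hclosed U).isCompact) hclosed
  refine ⟨y, ?_⟩
  have : (y ^ q)⁻¹ * x = 1 :=
    aux_eq_one_of_mem_all (fun U => Set.mem_iInter.mp hy U)
  rw [inv_mul_eq_one] at this
  exact this

/-- A finite group in which the `q`-th power map is surjective for every prime `q`
dividing its order is trivial. -/
lemma aux_finite_trivial {L : Type*} [Group L] [Finite L]
    (h : ∀ q : ℕ, q.Prime → q ∣ Nat.card L → Function.Surjective fun x : L => x ^ q) :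
    ∀ x : L, x = 1 := by
  have hcard : Nat.card L = 1 := by
    by_contra hc
    obtain ⟨q, hq, hdvd⟩ := Nat.exists_prime_and_dvd hc
    haveI : Fact q.Prime := ⟨hq⟩
    cases nonempty_fintype L
    obtain ⟨g, hg⟩ := exists_prime_orderOf_dvd_card (G := L) q
      (by rwa [← Nat.card_eq_fintype_card])
    have hinj : Function.Injective fun x : L => x ^ q :=
      (Finite.injective_iff_surjective).mpr (h q hq hdvd)
    have : g = 1 := hinj (by simp [← hg, pow_orderOf_eq_one g])
    rw [this, orderOf_one] at hg
    exact hq.one_lt.ne' hg.symm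
  intro x
  have : Subsingleton L := (Nat.card_eq_one_iff_unique.mp hcard).1
  exact Subsingleton.elim x 1

/-- If `f` is supported on a finite set `T` and each "coordinate factor" of `f`
belongs to a subgroup `N`, then `f ∈ N`. -/
lemma aux_support {ι : Type*} [DecidableEq ι] {G : ι → Type*} [∀ i, Group (G i)]
    (N : Subgroup (∀ i, G i)) (T : Finset ι) (f : ∀ i, G i)
    (hsupp : ∀ i ∉ T, f i = 1) (hmem : ∀ i, Pi.mulSingle i (f i) ∈ N) : f ∈ N := by
  induction T using Finset.induction generalizing f with
  | empty =>
    have : f = 1 := funext fun i => hsupp i (Finset.notMem_empty i)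
    rw [this]; exact N.one_mem
  | @insert a s ha ih =>
    have hdec : f = Pi.mulSingle a (f a) * Function.update f a 1 := by
      funext i
      by_cases hi : i = a
      · subst hi; simp
      · simp [Pi.mulSingle, Function.update_of_ne hi]
    rw [hdec]
    refine N.mul_mem (hmem a) (ih (Function.update f a 1) ?_ ?_)
    · intro i hi
      by_cases h' : i = a
      · subst h'; simp [Function.update_self]
      · rw [Function.update_of_ne h']
        exact hsupp i (by simp [Finset.mem_insert, h', hi])
    · intro i
      by_cases h' : i = a
      · subst h'; simpa using N.one_mem
      · rw [Function.update_of_ne h']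
        exact hmem i

/-- An element of `∏ p, G p` that is trivial at all primes dividing the index of a
finite-index normal subgroup `N` lies in `N`. -/
lemma aux_tail (G : Nat.Primes → Type*) [∀ p, Group (G p)]
    [∀ p, TopologicalSpace (G p)] [∀ p, IsTopologicalGroup (G p)]
    [∀ p, CompactSpace (G p)] [∀ p, TotallyDisconnectedSpace (G p)] [∀ p, T2Space (G p)]
    (hpro : ∀ p : Nat.Primes, ∀ (U : Subgroup (G p)) [U.Normal],
      IsOpen (U : Set (G p)) → IsPGroup (p : ℕ) ((G p) ⧸ U))
    (N : Subgroup (∀ p, G p)) [N.Normal] [N.FiniteIndex]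
    (g : ∀ p, G p) (hg : ∀ p : Nat.Primes, (p : ℕ) ∣ N.index → g p = 1) : g ∈ N := by
  classical
  set n := N.index with hn
  let B : Subgroup (∀ p, G p) :=
    { carrier := {f | ∀ p : Nat.Primes, (p : ℕ) ∣ n → f p = 1}
      one_mem' := fun p _ => rfl
      mul_mem' := fun ha hb p hp => by
        rw [Pi.mul_apply, ha p hp, hb p hp, one_mul]
      inv_mem' := fun ha p hp => by rw [Pi.inv_apply, ha p hp, inv_one] }
  haveI : Finite ((∀ p, G p) ⧸ N) := Subgroup.finite_quotient_of_finiteIndex (H := N)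
  let L := B.map (QuotientGroup.mk' N)
  have hL : ∀ x : L, x = 1 := by
    apply aux_finite_trivial
    intro q hq hqL x
    obtain ⟨xv, hxmem⟩ := x
    obtain ⟨b, hbB, hbx⟩ := Subgroup.mem_map.mp hxmem
    have hqn : q ∣ n := hqL.trans (by
      have h1 : Nat.card L ∣ Nat.card ((∀ p, G p) ⧸ N) := Subgroup.card_subgroup_dvd_card L
      rwa [← Subgroup.index_eq_card] at h1)
    have hroot : ∀ p : Nat.Primes, ∃ y : G p, y ^ q = b p ∧ ((p : ℕ) ∣ n → y = 1) := by
      intro p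
      by_cases hp : (p : ℕ) ∣ n
      · exact ⟨1, by rw [one_pow, hbB p hp], fun _ => rfl⟩
      · have hqp : q ≠ (p : ℕ) := fun he => hp (he ▸ hqn)
        obtain ⟨y, hy⟩ := aux_pow_surj p.2 (hpro p) hq hqp (b p)
        exact ⟨y, hy, fun hd => absurd hd hp⟩
    choose y hy1 hy2 using hroot
    have hyB : y ∈ B := fun p hp => hy2 p hp
    refine ⟨⟨QuotientGroup.mk' N y, Subgroup.mem_map.mpr ⟨y, hyB, rfl⟩⟩, ?_⟩
    apply Subtype.ext
    show ((QuotientGroup.mk' N) y) ^ q = xv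
    rw [← hbx, ← map_pow]
    congr 1
    funext p
    exact hy1 p
  have hmem : g ∈ B := fun p hp => hg p hp
  have h1 : (⟨QuotientGroup.mk' N g, Subgroup.mem_map.mpr ⟨g, hmem, rfl⟩⟩ : L) = 1 := hL _
  have hg1 : (QuotientGroup.mk' N) g = 1 := congrArg Subtype.val h1
  exact (QuotientGroup.eq_one_iff g).mp hg1

/-- Let `G = ∏_p G_p` be a pronilpotent group expressed as a product of
pro-`p` groups.  Then `G` is strongly complete (every finite-index subgroup is open)
if and only if every `G_p` is strongly complete. -/
theorem stmt_13 (G : Nat.Primes → Type*) [∀ p, Group (G p)]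
    [∀ p, TopologicalSpace (G p)] [∀ p, IsTopologicalGroup (G p)]
    [∀ p, CompactSpace (G p)] [∀ p, TotallyDisconnectedSpace (G p)] [∀ p, T2Space (G p)]
    (hpro : ∀ p : Nat.Primes, ∀ (U : Subgroup (G p)) [U.Normal],
      IsOpen (U : Set (G p)) → IsPGroup (p : ℕ) ((G p) ⧸ U)) :
    (∀ U : Subgroup (∀ p, G p), U.FiniteIndex → IsOpen (U : Set (∀ p, G p))) ↔
      (∀ p : Nat.Primes, ∀ U : Subgroup (G p), U.FiniteIndex → IsOpen (U : Set (G p))) := by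
  classical
  constructor
  · -- forward: strong completeness of the product implies it for each factor
    intro h p U hU
    set e := Pi.evalMonoidHom G p with he
    have hsurj : Function.Surjective e := fun x =>
      ⟨Pi.mulSingle p x, Pi.mulSingle_eq_same p x⟩
    have hfi : (U.comap e).FiniteIndex := by
      constructor
      rw [U.index_comap_of_surjective hsurj]
      exact hU.index_ne_zero
    have hopen := h (U.comap e) hfi
    have himg : (U : Set (G p)) = (fun f : ∀ p, G p => f p) '' (U.comap e : Set _) := by
      rw [Subgroup.coe_comap]
      exact (Set.image_preimage_eq _ hsurj).symm
    rw [himg]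
    exact isOpenMap_eval p _ hopen
  · -- reverse
    intro h U hU
    haveI := hU
    haveI : U.normalCore.FiniteIndex := Subgroup.finiteIndex_normalCore U
    suffices hNopen : IsOpen (U.normalCore : Set (∀ p, G p)) by
      exact Subgroup.isOpen_mono U.normalCore_le hNopen
    set N := U.normalCore with hNdef
    set n := N.index with hn
    have hn0 : n ≠ 0 := Subgroup.FiniteIndex.index_ne_zero
    -- the coordinate subgroups
    set Np : ∀ p : Nat.Primes, Subgroup (G p) :=
      fun p => N.comap (MonoidHom.mulSingle G p) with hNp
    have hNpfi : ∀ p, (Np p).FiniteIndex := by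
      intro p
      have hdvd : (Np p).index ∣ n := by
        rw [hNp]
        rw [Subgroup.index_comap]
        exact Subgroup.relIndex_dvd_index_of_normal N _
      exact ⟨fun h0 => hn0 (Nat.eq_zero_of_zero_dvd (h0 ▸ hdvd))⟩
    have hNpopen : ∀ p, IsOpen ((Np p : Subgroup (G p)) : Set (G p)) :=
      fun p => h p (Np p) (hNpfi p)
    -- the finite set of relevant primes
    have hS : {p : Nat.Primes | (p : ℕ) ∣ n}.Finite := by
      apply Set.Finite.preimage (Set.injOn_of_injective Subtype.val_injective)
        (s := {d : ℕ | d ∣ n})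
      exact Set.Finite.subset (Set.finite_Iic n) fun d hd =>
        Nat.le_of_dvd (Nat.pos_of_ne_zero hn0) hd
    -- the open subgroup
    let V : Subgroup (∀ p, G p) :=
      { carrier := {f | ∀ p : Nat.Primes, (p : ℕ) ∣ n → f p ∈ Np p}
        one_mem' := fun p _ => (Np p).one_mem
        mul_mem' := fun ha hb p hp => (Np p).mul_mem (ha p hp) (hb p hp)
        inv_mem' := fun ha p hp => (Np p).inv_mem (ha p hp) }
    have hVopen : IsOpen (V : Set (∀ p, G p)) := by
      have : (V : Set (∀ p, G p)) =
          ⋂ p ∈ {p : Nat.Primes | (p : ℕ) ∣ n}, (fun f : ∀ p, G p => f p) ⁻¹' (Np p) := by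
        ext f
        simp only [Set.mem_iInter, Set.mem_preimage, Set.mem_setOf_eq, SetLike.mem_coe]
        rfl
      rw [this]
      exact hS.isOpen_biInter fun p _ => (hNpopen p).preimage (continuous_apply p)
    refine Subgroup.isOpen_mono (H₁ := V) ?_ hVopen
    -- V ≤ N
    intro f hf
    have hf' : ∀ p : Nat.Primes, (p : ℕ) ∣ n → f p ∈ Np p := hf
    set f₁ : ∀ p, G p := fun p => if (p : ℕ) ∣ n then f p else 1 with hf₁
    have hf₁N : f₁ ∈ N := by
      apply aux_support N hS.toFinset
      · intro p hp
        rw [Set.Finite.mem_toFinset] at hp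
        exact if_neg hp
      · intro p
        by_cases hp : (p : ℕ) ∣ n
        · have : f₁ p = f p := if_pos hp
          rw [this]
          exact hf' p hp
        · have : f₁ p = 1 := if_neg hp
          rw [this, Pi.mulSingle_one]
          exact N.one_mem
    have hgN : f₁⁻¹ * f ∈ N := by
      apply aux_tail G hpro N
      intro p hp
      have : f₁ p = f p := if_pos hp
      rw [Pi.mul_apply, Pi.inv_apply, this, inv_mul_cancel]
    have : f = f₁ * (f₁⁻¹ * f) := by rw [← mul_assoc, mul_inv_cancel, one_mul]
    rw [this]
    exact N.mul_mem hf₁N hgN
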